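/- (Discrete Dirichlet problem.) Let h>0, 0<s<1/2, let B^h = {j∈ℤ : a ≤ j ≤ b} be a nonempty finite discrete interval, and let f:B^h→ℝ. Then there exists a unique u:ℤ→ℝ such that u_j = 0 for all j∉B^h and (-Δ_h)^s u_j = f_j for all j∈B^h. -/
import Mathlib


/-- The kernel of the fractional discrete Laplacian on the mesh of size `h`. -/
noncomputable def Ksh (h s : ℝ) (m : ℤ) : ℝ :=
  if m = 0 then 0 else
    ((4 : ℝ) ^ s * Real.Gamma (1/2 + s) / (Real.sqrt Real.pi * (Real.Gamma (1 - s) / s))) *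
      (Real.Gamma (|(m : ℝ)| - s) / (h ^ (2 * s) * Real.Gamma (|(m : ℝ)| + 1 + s)))


section aux
variable {h s : ℝ}

lemma Ksh_pos (hh : 0 < h) (hs0 : 0 < s) (hs1 : s < 1/2) {m : ℤ} (hm : m ≠ 0) : 0 < Ksh h s m := by
  have h1m : (1:ℝ) ≤ |(m:ℝ)| := by
    rw [← Int.cast_abs]
    exact_mod_cast Int.one_le_abs hm
  have hs1' : s < 1 := by linarith
  have hC : 0 < (4 : ℝ) ^ s * Real.Gamma (1/2 + s) /
      (Real.sqrt Real.pi * (Real.Gamma (1 - s) / s)) := by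
    apply div_pos
    · exact mul_pos (Real.rpow_pos_of_pos (by norm_num) s)
        (Real.Gamma_pos_of_pos (by linarith))
    · exact mul_pos (Real.sqrt_pos.2 Real.pi_pos)
        (div_pos (Real.Gamma_pos_of_pos (by linarith)) hs0)
  have h2 : 0 < Real.Gamma (|(m:ℝ)| - s) := Real.Gamma_pos_of_pos (by linarith)
  have h3 : 0 < Real.Gamma (|(m:ℝ)| + 1 + s) := Real.Gamma_pos_of_pos (by linarith)
  have h4 : 0 < h ^ (2*s) := Real.rpow_pos_of_pos hh _
  rw [Ksh, if_neg hm]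
  positivity

lemma Ksh_nonneg (hh : 0 < h) (hs0 : 0 < s) (hs1 : s < 1/2) (m : ℤ) : 0 ≤ Ksh h s m := by
  rcases eq_or_ne m 0 with rfl | hm
  · simp [Ksh]
  · exact (Ksh_pos hh hs0 hs1 hm).le

lemma Ksh_neg (m : ℤ) : Ksh h s (-m) = Ksh h s m := by
  unfold Ksh
  simp [neg_eq_zero, abs_neg]

/-- telescoping identity -/
lemma gamma_ratio_telescope (hs0 : 0 < s) (hs1 : s < 1/2) {x : ℝ} (hx : 1 ≤ x) :
    Real.Gamma (x - s) / Real.Gamma (x + 1 + s)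
      = (Real.Gamma (x - s) / Real.Gamma (x + s)
          - Real.Gamma (x + 1 - s) / Real.Gamma (x + 1 + s)) / (2*s) := by
  have hs1' : s < 1 := by linarith
  have hxs : (0:ℝ) < x - s := by linarith
  have hxs' : (0:ℝ) < x + s := by linarith
  have g1 : 0 < Real.Gamma (x - s) := Real.Gamma_pos_of_pos hxs
  have g2 : 0 < Real.Gamma (x + s) := Real.Gamma_pos_of_pos hxs'
  have e1 : Real.Gamma (x + 1 - s) = (x - s) * Real.Gamma (x - s) := by
    have := Real.Gamma_add_one (ne_of_gt hxs)
    rw [show x + 1 - s = x - s + 1 by ring, this]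
  have e2 : Real.Gamma (x + 1 + s) = (x + s) * Real.Gamma (x + s) := by
    have := Real.Gamma_add_one (ne_of_gt hxs')
    rw [show x + 1 + s = x + s + 1 by ring, this]
  have g2' : Real.Gamma (x + s) ≠ 0 := ne_of_gt g2
  have hxs'' : x + s ≠ 0 := ne_of_gt hxs'
  have hs0' : s ≠ 0 := ne_of_gt hs0
  rw [e1, e2]
  field_simp
  ring

lemma Ksh_summable (hh : 0 < h) (hs0 : 0 < s) (hs1 : s < 1/2) : Summable (Ksh h s) := by
  have hs1' : s < 1 := by linarith
  set C := (4:ℝ)^s * Real.Gamma (1/2+s) / (Real.sqrt Real.pi * (Real.Gamma (1-s)/s)) with hCdef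
  have hC : 0 < C := by
    apply div_pos
    · exact mul_pos (Real.rpow_pos_of_pos (by norm_num) s)
        (Real.Gamma_pos_of_pos (by linarith))
    · exact mul_pos (Real.sqrt_pos.2 Real.pi_pos)
        (div_pos (Real.Gamma_pos_of_pos (by linarith)) hs0)
  have hH : 0 < h ^ (2*s) := Real.rpow_pos_of_pos hh _
  set D := C / (h ^ (2*s) * (2*s)) with hDdef
  have hD : 0 < D := div_pos hC (mul_pos hH (by linarith))
  set bb : ℕ → ℝ := fun n => Real.Gamma ((n:ℝ) - s) / Real.Gamma ((n:ℝ) + s) with hbb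
  have hbnn : ∀ n : ℕ, 1 ≤ n → 0 ≤ bb n := by
    intro n hn
    have h1 : (1:ℝ) ≤ (n:ℝ) := by exact_mod_cast hn
    exact div_nonneg (Real.Gamma_pos_of_pos (by linarith)).le
      (Real.Gamma_pos_of_pos (by linarith)).le
  have hterm : ∀ n : ℕ, Ksh h s ((n:ℤ)+1) = D * (bb (n+1) - bb (n+2)) := by
    intro n
    have hx : (1:ℝ) ≤ (n:ℝ)+1 := by
      have : (0:ℝ) ≤ (n:ℝ) := Nat.cast_nonneg n
      linarith
    have tel := gamma_ratio_telescope hs0 hs1 hx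
    have hb1 : bb (n+1) = Real.Gamma ((n:ℝ) + 1 - s) / Real.Gamma ((n:ℝ) + 1 + s) := by
      simp only [hbb]; push_cast; ring_nf
    have hb2 : bb (n+2) = Real.Gamma ((n:ℝ) + 1 + 1 - s) / Real.Gamma ((n:ℝ) + 1 + 1 + s) := by
      simp only [hbb]; push_cast; ring_nf
    have habs : |(((n:ℤ)+1 : ℤ):ℝ)| = (n:ℝ)+1 := by
      push_cast
      rw [abs_of_nonneg]
      positivity
    rw [Ksh, if_neg (by omega : (n:ℤ)+1 ≠ 0), habs, ← hCdef]
    calc C * (Real.Gamma ((n:ℝ)+1-s) / (h^(2*s) * Real.Gamma ((n:ℝ)+1+1+s)))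
        = C / h^(2*s) * (Real.Gamma ((n:ℝ)+1-s) / Real.Gamma ((n:ℝ)+1+1+s)) := by
          ring
      _ = C / h^(2*s) * ((Real.Gamma ((n:ℝ)+1-s) / Real.Gamma ((n:ℝ)+1+s)
            - Real.Gamma ((n:ℝ)+1+1-s) / Real.Gamma ((n:ℝ)+1+1+s))/(2*s)) := by
          rw [show (n:ℝ)+1+1+s = ((n:ℝ)+1)+1+s by ring, show (n:ℝ)+1+1-s = ((n:ℝ)+1)+1-s by ring,
            tel]
      _ = D * (bb (n+1) - bb (n+2)) := by
          rw [hb1, hb2, hDdef]; ring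
  have key : ∀ n : ℕ, ∑ i ∈ Finset.range (n+1), Ksh h s (i:ℤ) = D * (bb 1 - bb (n+1)) := by
    intro n
    induction n with
    | zero => simp [Ksh]
    | succ n ih =>
        rw [Finset.sum_range_succ, ih, show ((n+1:ℕ):ℤ) = (n:ℤ)+1 by push_cast; ring, hterm n]
        ring
  have hnat : Summable (fun n : ℕ => Ksh h s (n:ℤ)) := by
    apply summable_of_sum_range_le (c := D * bb 1) (fun n => Ksh_nonneg hh hs0 hs1 _)
    intro N
    cases N with
    | zero => simpa using mul_nonneg hD.le (hbnn 1 le_rfl)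
    | succ n =>
        rw [key n]
        nlinarith [mul_nonneg hD.le (hbnn (n+1) (by omega))]
  exact Summable.of_nat_of_neg hnat (by simpa [Ksh_neg] using hnat)

end aux

lemma Ksh_shift_summable {h s : ℝ} (hh : 0 < h) (hs0 : 0 < s) (hs1 : s < 1/2) (j : ℤ) :
    Summable (fun m : ℤ => Ksh h s (j - m)) := by
  have hinj : Function.Injective (fun m : ℤ => j - m) := fun x y hxy => by simpa using hxy
  exact (Ksh_summable hh hs0 hs1).comp_injective hinj

lemma Ksh_shift_tsum {h s : ℝ} (j : ℤ) :
    ∑' m : ℤ, Ksh h s (j - m) = ∑' m : ℤ, Ksh h s m :=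
  (Equiv.subLeft j).tsum_eq (Ksh h s)

/-- The fractional discrete Laplacian `(-Δ_h)^s u_j = Σ_{m ≠ j} (u_j - u_m) K_s^h(j-m)`. -/
noncomputable def fracLap (h s : ℝ) (u : ℤ → ℝ) (j : ℤ) : ℝ :=
  ∑' m : ℤ, (u j - u m) * Ksh h s (j - m)

/-- Existence and uniqueness for the nonlocal discrete Dirichlet problem on a finite
discrete interval `B^h = {j : a ≤ j ≤ b}`. -/
theorem discrete_Dirichlet_problem (h s : ℝ) (hh : 0 < h) (hs0 : 0 < s) (hs1 : s < 1/2)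
    (a b : ℤ) (hab : a ≤ b) (f : ℤ → ℝ) :
    ∃! u : ℤ → ℝ,
      (∀ j : ℤ, j ∉ Set.Icc a b → u j = 0) ∧
      (∀ j ∈ Set.Icc a b, fracLap h s u j = f j) := by
  classical
  set S : ℝ := ∑' m : ℤ, Ksh h s m with hS
  set B : Finset ℤ := Finset.Icc a b with hB
  -- the matrix of the problem
  set M : Matrix B B ℝ :=
    fun j m => (if j = m then S else 0) - Ksh h s ((j:ℤ) - (m:ℤ)) with hM
  -- strict diagonal dominance
  have hrow : ∀ j : B, (∑ m : B, Ksh h s ((j:ℤ) - (m:ℤ))) < S := by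
    intro j
    have hjb : (j:ℤ) ≤ b := (Finset.mem_Icc.mp j.2).2
    have hnot : (b+1) ∉ B := by simp [hB, Finset.mem_Icc]
    have hpos : 0 < Ksh h s ((j:ℤ) - (b+1)) :=
      Ksh_pos hh hs0 hs1 (by omega)
    calc (∑ m : B, Ksh h s ((j:ℤ) - (m:ℤ)))
        = ∑ m ∈ B, Ksh h s ((j:ℤ) - m) :=
          Finset.sum_coe_sort B (fun m => Ksh h s ((j:ℤ) - m))
      _ < ∑ m ∈ insert (b+1) B, Ksh h s ((j:ℤ) - m) := by
          rw [Finset.sum_insert hnot]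
          have : (0:ℝ) ≤ ∑ m ∈ B, Ksh h s ((j:ℤ) - m) :=
            Finset.sum_nonneg fun m _ => Ksh_nonneg hh hs0 hs1 _
          linarith
      _ ≤ ∑' m : ℤ, Ksh h s ((j:ℤ) - m) :=
          Summable.sum_le_tsum _ (fun m _ => Ksh_nonneg hh hs0 hs1 _)
            (Ksh_shift_summable hh hs0 hs1 _)
      _ = S := Ksh_shift_tsum _
  have hSpos : 0 < S := by
    rcases Finset.nonempty_coe_sort.mpr (Finset.nonempty_Icc.mpr hab) with ⟨j⟩
    exact lt_of_le_of_lt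
      (Finset.sum_nonneg fun m _ => Ksh_nonneg hh hs0 hs1 _) (hrow j)
  have hdiag : ∀ k : B, ∑ m ∈ Finset.univ.erase k, ‖M k m‖ < ‖M k k‖ := by
    intro k
    have hMkk : M k k = S := by simp [hM, Ksh]
    have h1 : ∑ m ∈ Finset.univ.erase k, ‖M k m‖
        = ∑ m ∈ Finset.univ.erase k, Ksh h s ((k:ℤ) - (m:ℤ)) := by
      refine Finset.sum_congr rfl fun m hm => ?_
      have hkm : k ≠ m := (Finset.ne_of_mem_erase hm).symm
      simp only [hM, if_neg hkm, zero_sub, norm_neg, Real.norm_eq_abs]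
      exact abs_of_nonneg (Ksh_nonneg hh hs0 hs1 _)
    have h2 : ∑ m ∈ Finset.univ.erase k, Ksh h s ((k:ℤ) - (m:ℤ))
        = ∑ m : B, Ksh h s ((k:ℤ) - (m:ℤ)) := by
      rw [Finset.sum_erase_eq_sub (Finset.mem_univ k)]
      simp [Ksh]
    rw [h1, h2, hMkk, Real.norm_eq_abs, abs_of_pos hSpos]
    exact hrow k
  have hdet : IsUnit M.det := (det_ne_zero_of_sum_row_lt_diag hdiag).isUnit
  -- the key computation
  have key : ∀ u : ℤ → ℝ, (∀ j : ℤ, j ∉ Set.Icc a b → u j = 0) →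
      ∀ j : B, fracLap h s u (j:ℤ) = M.mulVec (fun m : B => u (m:ℤ)) j := by
    intro u hu j
    have hsupp : ∀ m : ℤ, m ∉ B → u m = 0 := by
      intro m hm
      exact hu m (by simpa [hB, Finset.mem_Icc, Set.mem_Icc] using hm)
    have h1 : Summable (fun m : ℤ => u (j:ℤ) * Ksh h s ((j:ℤ) - m)) :=
      (Ksh_shift_summable hh hs0 hs1 (j:ℤ)).mul_left _
    have h2 : Summable (fun m : ℤ => u m * Ksh h s ((j:ℤ) - m)) := by
      apply summable_of_finite_support
      apply Set.Finite.subset B.finite_toSet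
      intro m hm
      simp only [Function.mem_support] at hm
      by_contra hmB
      exact hm (by rw [hsupp m hmB, zero_mul])
    have hmulvec : M.mulVec (fun m : B => u (m:ℤ)) j
        = S * u (j:ℤ) - ∑ m : B, Ksh h s ((j:ℤ) - (m:ℤ)) * u (m:ℤ) := by
      simp only [Matrix.mulVec, dotProduct, hM, sub_mul, ite_mul, zero_mul,
        Finset.sum_sub_distrib, Finset.sum_ite_eq, Finset.mem_univ, if_true]
    have e0 : fracLap h s u (j:ℤ)
        = ∑' m : ℤ, (u (j:ℤ) * Ksh h s ((j:ℤ) - m) - u m * Ksh h s ((j:ℤ) - m)) := by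
      unfold fracLap
      congr 1
      funext m
      ring
    have t1 : ∑' m : ℤ, u (j:ℤ) * Ksh h s ((j:ℤ) - m) = S * u (j:ℤ) := by
      rw [tsum_mul_left, Ksh_shift_tsum, ← hS, mul_comm]
    have t2 : ∑' m : ℤ, u m * Ksh h s ((j:ℤ) - m)
        = ∑ m : B, Ksh h s ((j:ℤ) - (m:ℤ)) * u (m:ℤ) := by
      rw [tsum_eq_sum (s := B) (f := fun m : ℤ => u m * Ksh h s ((j:ℤ) - m))
          (fun m hm => mul_eq_zero_of_left (hsupp m hm) _),
        ← Finset.sum_coe_sort B (fun m => u m * Ksh h s ((j:ℤ) - m))]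
      exact Finset.sum_congr rfl fun m _ => mul_comm _ _
    rw [e0, Summable.tsum_sub h1 h2, t1, t2, hmulvec]
  -- the solution
  set fv : B → ℝ := fun m => f (m:ℤ) with hfv
  set v : B → ℝ := M⁻¹.mulVec fv with hv
  have hMv : M.mulVec v = fv := by
    rw [hv, Matrix.mulVec_mulVec, Matrix.mul_nonsing_inv M hdet, Matrix.one_mulVec]
  set u : ℤ → ℝ := fun j => if hj : j ∈ B then v ⟨j, hj⟩ else 0 with hu
  have husupp : ∀ j : ℤ, j ∉ Set.Icc a b → u j = 0 := by
    intro j hj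
    have : j ∉ B := by simpa [hB, Finset.mem_Icc, Set.mem_Icc] using hj
    simp [hu, this]
  have hrestr : (fun m : B => u (m:ℤ)) = v := by
    funext m
    simp [hu, m.2]
  refine ⟨u, ⟨husupp, ?_⟩, ?_⟩
  · intro j hj
    have hjB : j ∈ B := by simpa [hB, Finset.mem_Icc, Set.mem_Icc] using hj
    have := key u husupp ⟨j, hjB⟩
    rw [this, hrestr, hMv]
  · rintro u' ⟨hu'supp, hu'eq⟩
    have hMv' : M.mulVec (fun m : B => u' (m:ℤ)) = fv := by
      funext m
      rw [← key u' hu'supp m]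
      exact hu'eq (m:ℤ) (Set.mem_Icc.mpr (Finset.mem_Icc.mp m.2))
    have hveq : (fun m : B => u' (m:ℤ)) = v := by
      have h3 : M⁻¹.mulVec (M.mulVec (fun m : B => u' (m:ℤ))) = M⁻¹.mulVec fv := by
        rw [hMv']
      rwa [Matrix.mulVec_mulVec, Matrix.nonsing_inv_mul M hdet, Matrix.one_mulVec] at h3
    funext j
    by_cases hjB : j ∈ B
    · have := congrFun hveq ⟨j, hjB⟩
      simp only at this
      rw [this, hu]
      simp [hjB]
    · rw [hu'supp j (by simpa [hB, Finset.mem_Icc, Set.mem_Icc] using hjB), hu]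
      simp [hjB]
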